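/- In the setting of the previous statement, the graph map γ : 𝒮 → X defined by γ(𝐭) = lim_{n→∞} f_𝐭 ∘ f_{ξ⁻¹𝐭} ∘ ⋯ ∘ f_{ξ⁻ⁿ𝐭}(x₀) is continuous, where 𝒮 carries the metric d_S(𝐭, 𝐭′) = Σ_{i≥0} d(t₋ᵢ, t′₋ᵢ)/2ⁱ. -/

import Mathlib

open Filter Topology

/-- The solenoid over the circle map `φ(t) = k t (mod 1)`; index `n` stands for `t₋ₙ`. -/
def Sol (k : ℕ) : Type := {t : ℕ → AddCircle (1 : ℝ) // ∀ n, t n = (k : ℤ) • t (n + 1)}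

/-- Backward composition `f_{t₀} ∘ f_{t₋₁} ∘ ⋯ ∘ f_{t₋ₙ}` along the past of a base point. -/
def bcomp {X : Type*} (f : AddCircle (1 : ℝ) → X → X) (t : ℕ → AddCircle (1 : ℝ)) :
    ℕ → X → X
  | 0 => f (t 0)
  | n + 1 => bcomp f t n ∘ f (t (n + 1))

lemma bcomp_congr {X : Type*} (f : AddCircle (1 : ℝ) → X → X)
    {t t' : ℕ → AddCircle (1 : ℝ)} {n : ℕ} (h : ∀ i ≤ n, t i = t' i) (x : X) :
    bcomp f t n x = bcomp f t' n x := by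
  induction n generalizing x with
  | zero => simp [bcomp, h 0 le_rfl]
  | succ n ih =>
    simp only [bcomp, Function.comp_apply]
    rw [h (n + 1) le_rfl, ih (fun i hi => h i (hi.trans (Nat.le_succ n)))]

lemma bcomp_continuous {X : Type*} [MetricSpace X] (f : AddCircle (1 : ℝ) → X → X)
    (hcont : Continuous fun p : AddCircle (1 : ℝ) × X => f p.1 p.2) (n : ℕ) :
    Continuous fun p : (ℕ → AddCircle (1 : ℝ)) × X => bcomp f p.1 n p.2 := by
  have key : ∀ m : ℕ, Continuous fun p : (ℕ → AddCircle (1 : ℝ)) × X => f (p.1 m) p.2 := by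
    intro m
    have h1 : Continuous fun p : (ℕ → AddCircle (1 : ℝ)) × X => p.1 m :=
      (continuous_apply m).comp continuous_fst
    exact hcont.comp (h1.prodMk continuous_snd)
  induction n with
  | zero => exact key 0
  | succ n ih => exact ih.comp (continuous_fst.prodMk (key (n + 1)))

lemma bcomp_shift {X : Type*} (f : AddCircle (1 : ℝ) → X → X)
    (t : ℕ → AddCircle (1 : ℝ)) (n m : ℕ) (x : X) :
    ∃ y : X, bcomp f t (n + m) x = bcomp f t n y := by
  induction m generalizing x with
  | zero => exact ⟨x, rfl⟩
  | succ m ih =>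
    obtain ⟨y, hy⟩ := ih (f (t (n + m + 1)) x)
    exact ⟨y, hy⟩

/-- The graph map `γ(𝐭) = lim_n f_𝐭 ∘ f_{ξ⁻¹𝐭} ∘ ⋯ ∘ f_{ξ⁻ⁿ𝐭}(x₀)` is continuous with
respect to the solenoid metric `d_S(𝐭,𝐭') = Σᵢ d(t₋ᵢ, t'₋ᵢ)/2ⁱ`. -/
theorem graph_map_continuous {X : Type*} [MetricSpace X] [CompactSpace X] [Nonempty X]
    {k : ℕ} (f : AddCircle (1 : ℝ) → X → X)
    (hcont : Continuous fun p : AddCircle (1 : ℝ) × X => f p.1 p.2)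
    (hwh : ∀ ε > 0, ∃ n₀ : ℕ, ∀ tt : Sol k, ∀ n ≥ n₀,
      Metric.diam (bcomp f tt.1 n '' Set.univ) < ε)
    (γ : Sol k → X)
    (hγ : ∀ (tt : Sol k) (x : X), Tendsto (fun n => bcomp f tt.1 n x) atTop (𝓝 (γ tt))) :
    ∀ tt : Sol k, ∀ ε > 0, ∃ δ > 0, ∀ tt' : Sol k,
      (∑' i : ℕ, dist (tt.1 i) (tt'.1 i) / 2 ^ i) < δ → dist (γ tt) (γ tt') < ε := by
  intro tt ε hε
  obtain ⟨x₀⟩ := ‹Nonempty X›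
  obtain ⟨n₀, hn₀⟩ := hwh (ε / 4) (by positivity)
  -- continuity of x ↦ bcomp f s n₀ x for any s
  have hcX : ∀ s : ℕ → AddCircle (1 : ℝ), Continuous fun x : X => bcomp f s n₀ x := by
    intro s
    exact (bcomp_continuous f hcont n₀).comp (continuous_const.prodMk continuous_id)
  -- Claim 1: for every s : Sol k, dist (γ s) (bcomp f s.1 n₀ x₀) ≤ ε/4
  have claim1 : ∀ s : Sol k, dist (γ s) (bcomp f s.1 n₀ x₀) ≤ ε / 4 := by
    intro s
    have htend : Tendsto (fun m => bcomp f s.1 (n₀ + m) x₀) atTop (𝓝 (γ s)) := by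
      have := (hγ s x₀).comp (tendsto_add_atTop_nat n₀)
      simpa [Function.comp_def, Nat.add_comm] using this
    have hbd : Bornology.IsBounded (bcomp f s.1 n₀ '' Set.univ) :=
      (isCompact_univ.image (hcX s.1)).isBounded
    refine le_of_tendsto (htend.dist tendsto_const_nhds) (Eventually.of_forall fun m => ?_)
    obtain ⟨y, hy⟩ := bcomp_shift f s.1 n₀ m x₀
    have h1 : bcomp f s.1 (n₀ + m) x₀ ∈ bcomp f s.1 n₀ '' Set.univ :=
      ⟨y, Set.mem_univ y, hy.symm⟩
    have h2 : bcomp f s.1 n₀ x₀ ∈ bcomp f s.1 n₀ '' Set.univ :=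
      ⟨x₀, Set.mem_univ x₀, rfl⟩
    exact le_of_lt (lt_of_le_of_lt (Metric.dist_le_diam_of_mem hbd h1 h2)
      (hn₀ s n₀ le_rfl))
  -- Claim 2: continuity of the finite composition in the first n₀+1 coordinates
  set e : (Fin (n₀ + 1) → AddCircle (1 : ℝ)) → ℕ → AddCircle (1 : ℝ) :=
    fun s i => if h : i < n₀ + 1 then s ⟨i, h⟩ else 0 with he
  have hecont : Continuous e := by
    refine continuous_pi fun i => ?_
    by_cases h : i < n₀ + 1
    · have h' : i ≤ n₀ := Nat.lt_succ_iff.1 h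
      simpa [he, h, h'] using continuous_apply (⟨i, h⟩ : Fin (n₀ + 1))
    · have h' : ¬ i ≤ n₀ := fun h'' => h (Nat.lt_succ_iff.2 h'')
      simpa [he, h, h'] using (continuous_const : Continuous fun _ :
        (Fin (n₀ + 1) → AddCircle (1 : ℝ)) => (0 : AddCircle (1 : ℝ)))
  set G : (Fin (n₀ + 1) → AddCircle (1 : ℝ)) → X := fun s => bcomp f (e s) n₀ x₀ with hG
  have hGcont : Continuous G :=
    (bcomp_continuous f hcont n₀).comp (hecont.prodMk continuous_const)
  set pt : Fin (n₀ + 1) → AddCircle (1 : ℝ) := fun i => tt.1 i with hpt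
  obtain ⟨δ', hδ'pos, hδ'⟩ :=
    Metric.continuousAt_iff.1 (hGcont.continuousAt (x := pt)) (ε / 4) (by positivity)
  refine ⟨δ' / 2 ^ n₀, by positivity, fun tt' hsum => ?_⟩
  -- Summability of the distance series
  have hsummable : Summable fun i : ℕ => dist (tt.1 i) (tt'.1 i) / 2 ^ i := by
    have hbd : Bornology.IsBounded (Set.univ : Set (AddCircle (1 : ℝ))) :=
      isCompact_univ.isBounded
    set D := Metric.diam (Set.univ : Set (AddCircle (1 : ℝ)))
    refine Summable.of_nonneg_of_le (fun i => by positivity)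
      (fun i => ?_) ((summable_geometric_two.mul_left D))
    have hdle : dist (tt.1 i) (tt'.1 i) ≤ D :=
      Metric.dist_le_diam_of_mem hbd (Set.mem_univ _) (Set.mem_univ _)
    have : (1 : ℝ) / 2 ^ i = (1 / 2 : ℝ) ^ i := by
      rw [div_pow, one_pow]
    calc dist (tt.1 i) (tt'.1 i) / 2 ^ i ≤ D / 2 ^ i := by gcongr
      _ = D * (1 / 2) ^ i := by rw [← this]; ring
  -- each coordinate distance for i ≤ n₀ is < δ'
  have hcoord : ∀ i : Fin (n₀ + 1), dist (tt'.1 i) (pt i) < δ' := by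
    intro i
    have h1 : dist (tt.1 i) (tt'.1 i) / 2 ^ (i : ℕ) ≤
        ∑' j : ℕ, dist (tt.1 j) (tt'.1 j) / 2 ^ j :=
      hsummable.le_tsum i (fun j _ => by positivity)
    have h2 : dist (tt.1 i) (tt'.1 i) / 2 ^ (i : ℕ) < δ' / 2 ^ n₀ := lt_of_le_of_lt h1 hsum
    have h3 : dist (tt.1 i) (tt'.1 i) < δ' / 2 ^ n₀ * 2 ^ (i : ℕ) :=
      (div_lt_iff₀ (by positivity)).1 h2
    have h4 : (δ' / 2 ^ n₀) * 2 ^ (i : ℕ) ≤ δ' := by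
      rw [div_mul_eq_mul_div, div_le_iff₀ (by positivity)]
      have : (2 : ℝ) ^ (i : ℕ) ≤ 2 ^ n₀ :=
        pow_le_pow_right₀ (by norm_num) (Nat.lt_succ_iff.1 i.2)
      nlinarith [hδ'pos.le]
    rw [dist_comm]
    exact lt_of_lt_of_le h3 h4
  have hpi : dist (fun i : Fin (n₀ + 1) => tt'.1 i) pt < δ' :=
    (dist_pi_lt_iff hδ'pos).2 hcoord
  have hG' : dist (G fun i : Fin (n₀ + 1) => tt'.1 i) (G pt) < ε / 4 := hδ' hpi
  -- identify G values with bcomp values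
  have hGtt' : G (fun i : Fin (n₀ + 1) => tt'.1 i) = bcomp f tt'.1 n₀ x₀ := by
    apply bcomp_congr
    intro i hi
    simp [he, hi, Nat.lt_succ_iff.2 hi]
  have hGtt : G pt = bcomp f tt.1 n₀ x₀ := by
    apply bcomp_congr
    intro i hi
    simp [he, hpt, hi, Nat.lt_succ_iff.2 hi]
  have hmid : dist (bcomp f tt.1 n₀ x₀) (bcomp f tt'.1 n₀ x₀) < ε / 4 := by
    rw [← hGtt, ← hGtt', dist_comm]
    exact hG'
  have h1 := claim1 tt
  have h2 := claim1 tt'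
  calc dist (γ tt) (γ tt') ≤ dist (γ tt) (bcomp f tt.1 n₀ x₀) +
        dist (bcomp f tt.1 n₀ x₀) (bcomp f tt'.1 n₀ x₀) +
        dist (bcomp f tt'.1 n₀ x₀) (γ tt') := dist_triangle4 _ _ _ _
    _ < ε := by rw [dist_comm (bcomp f tt'.1 n₀ x₀) (γ tt')]; linarith
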